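/- Let L be a Lie algebra over a field F. If Der(L) is simple, then L is isomorphic to ĝ/C where ĝ is the universal central extension of the simple Lie algebra g = Der(L) and C is a central ideal of ĝ such that every derivation of ĝ preserving C is inner. -/

import Mathlib

universe u
section
variable (F : Type u) [Field F] (L : Type u) [LieRing L] [LieAlgebra F L]

theorem aux_center_bot (hsimple : LieAlgebra.IsSimple F (LieDerivation F L L)) :
    LieAlgebra.center F (LieDerivation F L L) = ⊥ := by
  rcases hsimple.eq_bot_or_eq_top (LieAlgebra.center F (LieDerivation F L L)) with h | h
  · exact h
  · exfalso
    apply hsimple.non_abelian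
    constructor
    intro D E
    have hD : D ∈ LieAlgebra.center F (LieDerivation F L L) := h ▸ trivial
    rw [LieModule.mem_maxTrivSubmodule] at hD
    rw [← lie_skew, hD E, neg_zero]

theorem aux_ad_surj (hsimple : LieAlgebra.IsSimple F (LieDerivation F L L)) :
    Function.Surjective (LieDerivation.ad F L) := by
  rcases hsimple.eq_bot_or_eq_top (LieDerivation.ad F L).idealRange with h | h
  · exfalso
    -- every bracket vanishes
    have habelian : ∀ x y : L, ⁅x, y⁆ = 0 := by
      intro x y
      have : LieDerivation.ad F L x ∈ (LieDerivation.ad F L).idealRange :=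
        (LieDerivation.ad F L).mem_idealRange x
      rw [h, LieSubmodule.mem_bot] at this
      have := congrArg (fun D : LieDerivation F L L => D y) this
      simpa using this
    -- identity is a derivation
    set idD : LieDerivation F L L :=
      ⟨LinearMap.id, fun a b => by simp [habelian]⟩ with hidD
    have hcent : idD ∈ LieAlgebra.center F (LieDerivation F L L) := by
      rw [LieModule.mem_maxTrivSubmodule]
      intro E
      ext z
      simp [hidD]
    rw [aux_center_bot F L hsimple, LieSubmodule.mem_bot] at hcent
    have hzero : ∀ z : L, z = 0 := by
      intro z
      have := congrArg (fun D : LieDerivation F L L => D z) hcent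
      simpa [hidD] using this
    apply hsimple.non_abelian
    constructor
    intro D E
    ext z
    simp [hzero z]
  · intro D
    have : D ∈ (LieDerivation.ad F L).idealRange := h ▸ trivial
    exact LieDerivation.mem_ad_idealRange_iff.mp this
end


theorem aux_derived_top (g : Type u) {F : Type u} [Field F] [LieRing g] [LieAlgebra F g]
    (hsimple : LieAlgebra.IsSimple F g) :
    ⁅(⊤ : LieIdeal F g), (⊤ : LieIdeal F g)⁆ = ⊤ := by
  rcases hsimple.eq_bot_or_eq_top ⁅(⊤ : LieIdeal F g), (⊤ : LieIdeal F g)⁆ with h | h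
  · exfalso
    apply hsimple.non_abelian
    constructor
    intro x y
    have : ⁅x, y⁆ ∈ ⁅(⊤ : LieIdeal F g), (⊤ : LieIdeal F g)⁆ :=
      LieSubmodule.lie_mem_lie trivial trivial
    rwa [h, LieSubmodule.mem_bot] at this
  · exact h

/-- if `f : K → g` is surjective and `g` is perfect, every element of `g` is the image of
an element of the derived ideal of `K`. -/
theorem aux_derived_surj {F K g : Type u} [Field F] [LieRing K] [LieAlgebra F K]
    [LieRing g] [LieAlgebra F g] (hperf : ⁅(⊤ : LieIdeal F g), (⊤ : LieIdeal F g)⁆ = ⊤)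
    (f : K →ₗ⁅F⁆ g) (hsurj : Function.Surjective f) :
    ∀ D : g, ∃ d ∈ ⁅(⊤ : LieIdeal F K), (⊤ : LieIdeal F K)⁆, f d = D := by
  intro D
  have hD : D ∈ (⁅(⊤ : LieIdeal F g), (⊤ : LieIdeal F g)⁆ : LieIdeal F g).toSubmodule := by
    rw [hperf]; trivial
  set S : Submodule F g :=
    Submodule.map (f : K →ₗ[F] g) (⁅(⊤ : LieIdeal F K), (⊤ : LieIdeal F K)⁆ : LieIdeal F K).toSubmodule
    with hS
  have hle : (⁅(⊤ : LieIdeal F g), (⊤ : LieIdeal F g)⁆ : LieIdeal F g).toSubmodule ≤ S := by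
    rw [LieSubmodule.lieIdeal_oper_eq_linear_span']
    apply Submodule.span_le.mpr
    rintro _ ⟨x, -, y, -, rfl⟩
    obtain ⟨a, rfl⟩ := hsurj x
    obtain ⟨b, rfl⟩ := hsurj y
    exact ⟨⁅a, b⁆, LieSubmodule.lie_mem_lie trivial trivial, f.map_lie a b⟩
  obtain ⟨d, hd, hfd⟩ := hle hD
  exact ⟨d, hd, hfd⟩

section
variable {F : Type u} [Field F] {L : Type u} [LieRing L] [LieAlgebra F L]

theorem aux_L_perfect (hsimple : LieAlgebra.IsSimple F (LieDerivation F L L))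
    (hcenterDer : LieAlgebra.center F (LieDerivation F L L) = ⊥)
    (hadsurj : Function.Surjective (LieDerivation.ad F L)) :
    ⁅(⊤ : LieIdeal F L), (⊤ : LieIdeal F L)⁆ = ⊤ := by
  set dL : LieIdeal F L := ⁅(⊤ : LieIdeal F L), (⊤ : LieIdeal F L)⁆ with hdL
  by_contra hne
  have : ∃ x₀ : L, x₀ ∉ dL := by
    by_contra h
    push_neg at h
    apply hne
    ext x
    simp [h x]
  obtain ⟨x₀, hx₀⟩ := this
  -- a functional vanishing on the derived ideal but not at x₀
  have hmkne : Submodule.Quotient.mk (p := dL.toSubmodule) x₀ ≠ 0 := by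
    intro h
    exact hx₀ ((Submodule.Quotient.mk_eq_zero _).mp h)
  have : ¬ (∀ φ : Module.Dual F (L ⧸ dL.toSubmodule),
      φ (Submodule.Quotient.mk x₀) = 0) := by
    rw [Module.forall_dual_apply_eq_zero_iff]
    exact hmkne
  push_neg at this
  obtain ⟨φ, hφ⟩ := this
  set f : L →ₗ[F] F := φ.comp dL.toSubmodule.mkQ with hf
  have hfd : ∀ d ∈ dL, f d = 0 := by
    intro d hd
    simp only [hf, LinearMap.comp_apply, Submodule.mkQ_apply]
    rw [(Submodule.Quotient.mk_eq_zero _).mpr hd, map_zero]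
  have hfx₀ : f x₀ ≠ 0 := hφ
  -- x₀ = d + z with d ∈ dL, z central
  obtain ⟨d, hd, hqd⟩ := aux_derived_surj (aux_derived_top _ hsimple)
    (LieDerivation.ad F L) hadsurj (LieDerivation.ad F L x₀)
  set z : L := x₀ - d with hz
  have hzc : z ∈ LieAlgebra.center F L := by
    rw [← LieDerivation.ad_ker_eq_center, LieHom.mem_ker, map_sub, hqd, sub_self]
  have hzlie : ∀ x : L, ⁅x, z⁆ = 0 := (LieModule.mem_maxTrivSubmodule F L L z).mp hzc
  -- the derivation x ↦ f x • z
  set D : LieDerivation F L L := ⟨LinearMap.smulRight f z, by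
    intro a b
    have h1 : f ⁅a, b⁆ = 0 :=
      hfd _ (LieSubmodule.lie_mem_lie trivial trivial)
    simp [h1, hzlie, sub_eq_zero]⟩ with hD
  have hDc : D ∈ LieAlgebra.center F (LieDerivation F L L) := by
    rw [LieModule.mem_maxTrivSubmodule]
    intro E
    obtain ⟨y, rfl⟩ := hadsurj E
    rw [← neg_eq_zero, ← lie_skew, LieDerivation.lie_der_ad_eq_ad_der]
    have : LieDerivation.ad F L z = 0 := by
      rw [← LieHom.mem_ker, LieDerivation.ad_ker_eq_center]
      exact hzc
    have hDy : D y = f y • z := rfl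
    rw [hDy, map_smul, this, smul_zero, neg_neg]
  rw [hcenterDer, LieSubmodule.mem_bot] at hDc
  have hfz : f x₀ • z = 0 := by
    have := congrArg (fun E : LieDerivation F L L => E x₀) hDc
    simpa [hD] using this
  rcases smul_eq_zero.mp hfz with h | h
  · exact hfx₀ h
  · apply hfx₀
    have : x₀ = d := by rw [← sub_eq_zero]; exact h
    rw [this]
    exact hfd _ hd
end

section
variable {F : Type u} [Field F] {L : Type u} [LieRing L] [LieAlgebra F L]
  {ghat : Type u} [LieRing ghat] [LieAlgebra F ghat]

theorem aux_ghat_perfect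
    (hsimple : LieAlgebra.IsSimple F (LieDerivation F L L))
    (q : ghat →ₗ⁅F⁆ LieDerivation F L L) (hqsurj : Function.Surjective q)
    (hqcent : q.ker ≤ LieAlgebra.center F ghat)
    (huniv : ∀ (E : Type u) [LieRing E] [LieAlgebra F E]
        (π : E →ₗ⁅F⁆ LieDerivation F L L),
      Function.Surjective π → π.ker ≤ LieAlgebra.center F E →
        ∃! ψ : ghat →ₗ⁅F⁆ E, π.comp ψ = q) :
    ∀ x : ghat, x ∈ ⁅(⊤ : LieIdeal F ghat), (⊤ : LieIdeal F ghat)⁆ := by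
  set dG : LieIdeal F ghat := ⁅(⊤ : LieIdeal F ghat), (⊤ : LieIdeal F ghat)⁆ with hdG
  set π : dG →ₗ⁅F⁆ LieDerivation F L L := q.comp dG.incl with hπ
  have hqd : ∀ D : LieDerivation F L L, ∃ d ∈ dG, q d = D :=
    aux_derived_surj (aux_derived_top _ hsimple) q hqsurj
  have hπsurj : Function.Surjective π := by
    intro D
    obtain ⟨d, hd, hqdD⟩ := hqd D
    exact ⟨⟨d, hd⟩, hqdD⟩
  have hπcent : π.ker ≤ LieAlgebra.center F dG := by
    intro x hx
    rw [LieHom.mem_ker] at hx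
    have hx' : (x : ghat) ∈ q.ker := by rwa [LieHom.mem_ker]
    have hc := hqcent hx'
    rw [LieModule.mem_maxTrivSubmodule] at hc
    rw [LieModule.mem_maxTrivSubmodule]
    intro y
    ext
    exact hc (y : ghat)
  obtain ⟨ψ₀, hψ₀, -⟩ := huniv dG π hπsurj hπcent
  obtain ⟨χ, -, hχuniq⟩ := huniv ghat q hqsurj hqcent
  have h1 : dG.incl.comp ψ₀ = χ := by
    apply hχuniq
    apply LieHom.ext
    intro x
    exact DFunLike.congr_fun hψ₀ x
  have h2 : LieHom.id = χ := by
    apply hχuniq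
    apply LieHom.ext
    intro x
    rfl
  intro x
  have : dG.incl (ψ₀ x) = x := by
    rw [← LieHom.comp_apply, h1, ← h2]
    rfl
  rw [← this]
  exact (ψ₀ x).2
end


/-- Let `L` be a Lie algebra over a field `F` with `Der(L)` simple.  Then, given a
universal central extension `q : ĝ → g` of the simple Lie algebra `g = Der(L)`, the
algebra `L` is isomorphic to `ĝ/C` for some central ideal `C` of `ĝ` such that every
derivation of `ĝ` preserving `C` is inner. -/
theorem stmt14 (F : Type u) [Field F] (L : Type u) [LieRing L] [LieAlgebra F L]
    (hsimple : LieAlgebra.IsSimple F (LieDerivation F L L))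
    (ghat : Type u) [LieRing ghat] [LieAlgebra F ghat]
    -- `q : ĝ → Der(L)` is a central extension
    (q : ghat →ₗ⁅F⁆ LieDerivation F L L) (hqsurj : Function.Surjective q)
    (hqcent : q.ker ≤ LieAlgebra.center F ghat)
    -- ... which is universal
    (huniv : ∀ (E : Type u) [LieRing E] [LieAlgebra F E]
        (π : E →ₗ⁅F⁆ LieDerivation F L L),
      Function.Surjective π → π.ker ≤ LieAlgebra.center F E →
        ∃! ψ : ghat →ₗ⁅F⁆ E, π.comp ψ = q) :
    ∃ C : LieIdeal F ghat, C ≤ LieAlgebra.center F ghat ∧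
      (∀ D : LieDerivation F ghat ghat, (∀ x ∈ C, D x ∈ C) →
        ∃ y : ghat, D = LieDerivation.ad F ghat y) ∧
      Nonempty (L ≃ₗ⁅F⁆ ghat ⧸ C) := by
  have hcent := aux_center_bot F L hsimple
  have hadsurj := aux_ad_surj F L hsimple
  have hLperf := aux_L_perfect hsimple hcent hadsurj
  have hgperf := aux_ghat_perfect hsimple q hqsurj hqcent huniv
  have hadker : (LieDerivation.ad F L).ker ≤ LieAlgebra.center F L := by
    rw [LieDerivation.ad_ker_eq_center]
  obtain ⟨ψ, hψ, -⟩ := huniv L (LieDerivation.ad F L) hadsurj hadker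
  have hcomp : ∀ u : ghat, LieDerivation.ad F L (ψ u) = q u :=
    fun u => DFunLike.congr_fun hψ u
  -- every element of `L` is congruent to an element of the image of `ψ` modulo the center
  have hsec : ∀ x : L, ∃ u : ghat, ∀ y : L, ⁅x - ψ u, y⁆ = 0 := by
    intro x
    obtain ⟨u, hu⟩ := hqsurj (LieDerivation.ad F L x)
    refine ⟨u, ?_⟩
    have : LieDerivation.ad F L (x - ψ u) = 0 := by
      rw [map_sub, hcomp, hu, sub_self]
    have hc : x - ψ u ∈ LieAlgebra.center F L := by
      rw [← LieDerivation.ad_ker_eq_center, LieHom.mem_ker]; exact this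
    rw [LieModule.mem_maxTrivSubmodule] at hc
    intro y
    rw [← neg_eq_zero, ← lie_skew, hc y, neg_zero, neg_zero]
  -- `ψ` is surjective
  have hψsurj : Function.Surjective ψ := by
    have hle : (⁅(⊤ : LieIdeal F L), (⊤ : LieIdeal F L)⁆ : LieIdeal F L).toSubmodule ≤
        LinearMap.range (ψ : ghat →ₗ[F] L) := by
      rw [LieSubmodule.lieIdeal_oper_eq_linear_span']
      apply Submodule.span_le.mpr
      rintro _ ⟨a, -, b, -, rfl⟩
      obtain ⟨u, hu⟩ := hsec a
      obtain ⟨v, hv⟩ := hsec b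
      refine ⟨⁅u, v⁆, ?_⟩
      have hzb : ⁅ψ u, b - ψ v⁆ = 0 := by
        rw [← neg_eq_zero, ← lie_skew, hv (ψ u), neg_zero, neg_zero]
      have ha : a = (a - ψ u) + ψ u := by abel
      have hb : b = (b - ψ v) + ψ v := by abel
      have expand : ⁅a, b⁆ = ⁅ψ u, ψ v⁆ := by
        conv_lhs => rw [ha, hb]
        rw [add_lie, hu ((b - ψ v) + ψ v), zero_add, lie_add, hzb, zero_add]
      rw [expand, ← LieHom.map_lie]
      rfl
    intro x
    have hx : x ∈ (⁅(⊤ : LieIdeal F L), (⊤ : LieIdeal F L)⁆ : LieIdeal F L).toSubmodule := by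
      rw [hLperf]; trivial
    exact hle hx
  -- the central ideal C
  set C : LieIdeal F ghat := ψ.ker with hC
  have hCcent : C ≤ LieAlgebra.center F ghat := by
    intro x hx
    apply hqcent
    rw [LieHom.mem_ker] at hx ⊢
    rw [← hcomp, hx, map_zero]
  have hCker : C.toSubmodule ≤ LinearMap.ker (ψ : ghat →ₗ[F] L) := by
    intro x hx
    rw [LinearMap.mem_ker]
    exact (LieHom.mem_ker).mp hx
  have hCker' : LinearMap.ker (ψ : ghat →ₗ[F] L) ≤ C.toSubmodule := by
    intro x hx
    rw [LinearMap.mem_ker] at hx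
    exact (LieHom.mem_ker).mpr hx
  -- the equivalence ghat ⧸ C ≃ L
  set e : (ghat ⧸ C) →ₗ[F] L := Submodule.liftQ C.toSubmodule (ψ : ghat →ₗ[F] L) hCker
    with he
  have hemk : ∀ u : ghat, e (LieSubmodule.Quotient.mk (N := C) u) = ψ u := fun u => rfl
  have hebij : Function.Bijective e := by
    constructor
    · rw [← LinearMap.ker_eq_bot]
      exact Submodule.ker_liftQ_eq_bot _ _ _ hCker'
    · intro x
      obtain ⟨u, hu⟩ := hψsurj x
      exact ⟨LieSubmodule.Quotient.mk (N := C) u, hu⟩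
  set elin : (ghat ⧸ C) ≃ₗ[F] L := LinearEquiv.ofBijective e hebij with helin
  have hmk_surj : Function.Surjective (LieSubmodule.Quotient.mk (N := C) : ghat → ghat ⧸ C) :=
    Submodule.Quotient.mk_surjective _
  set eqv : (ghat ⧸ C) ≃ₗ⁅F⁆ L :=
    { elin with
      map_lie' := by
        intro x y
        obtain ⟨a, rfl⟩ := hmk_surj x
        obtain ⟨b, rfl⟩ := hmk_surj y
        show e ⁅_, _⁆ = ⁅e _, e _⁆
        rw [← LieSubmodule.Quotient.mk_bracket, hemk, hemk, hemk, LieHom.map_lie] }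
    with heqv
  refine ⟨C, hCcent, ?_, ⟨eqv.symm⟩⟩
  -- derivations preserving C are inner
  intro D hD
  have h2 : C.toSubmodule ≤ LinearMap.ker (C.toSubmodule.mkQ ∘ₗ (D : ghat →ₗ[F] ghat)) := by
    intro x hx
    rw [LinearMap.mem_ker, LinearMap.comp_apply, Submodule.mkQ_apply,
      Submodule.Quotient.mk_eq_zero]
    exact hD x hx
  set Dq : (ghat ⧸ C) →ₗ[F] (ghat ⧸ C) :=
    Submodule.liftQ C.toSubmodule (C.toSubmodule.mkQ ∘ₗ (D : ghat →ₗ[F] ghat)) h2 with hDq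
  have hDqmk : ∀ u : ghat,
      Dq (LieSubmodule.Quotient.mk (N := C) u) = LieSubmodule.Quotient.mk (N := C) (D u) :=
    fun u => rfl
  set D' : L →ₗ[F] L := (elin : (ghat ⧸ C) →ₗ[F] L) ∘ₗ Dq ∘ₗ (elin.symm : L →ₗ[F] (ghat ⧸ C))
    with hD'
  have hD'psi : ∀ u : ghat, D' (ψ u) = ψ (D u) := by
    intro u
    have h1 : elin.symm (ψ u) = LieSubmodule.Quotient.mk (N := C) u := by
      rw [LinearEquiv.symm_apply_eq]
      exact (hemk u).symm
    simp only [hD', LinearMap.comp_apply, LinearEquiv.coe_coe, h1, hDqmk]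
    exact hemk (D u)
  set D'' : LieDerivation F L L := ⟨D', by
    intro a b
    obtain ⟨u, rfl⟩ := hψsurj a
    obtain ⟨v, rfl⟩ := hψsurj b
    show D' ⁅ψ u, ψ v⁆ = ⁅ψ u, D' (ψ v)⁆ - ⁅ψ v, D' (ψ u)⁆
    rw [← LieHom.map_lie, hD'psi, hD'psi, hD'psi, LieDerivation.apply_lie_eq_sub,
      map_sub, LieHom.map_lie, LieHom.map_lie]⟩ with hD''
  obtain ⟨w, hw⟩ := hadsurj D''
  obtain ⟨v, rfl⟩ := hψsurj w
  refine ⟨v, ?_⟩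
  -- E := D - ad v vanishes
  set E : LieDerivation F ghat ghat := D - LieDerivation.ad F ghat v with hE
  have hEC : ∀ u : ghat, E u ∈ C := by
    intro u
    have hadw : D'' (ψ u) = ⁅ψ v, ψ u⁆ := by
      rw [← hw]
      simp
    have : ψ (D u) = ψ ⁅v, u⁆ := by
      rw [LieHom.map_lie, ← hadw]
      exact (hD'psi u).symm
    have hker : D u - ⁅v, u⁆ ∈ C := by
      rw [hC, LieHom.mem_ker, map_sub, this, sub_self]
    have hEu : E u = D u - ⁅v, u⁆ := by
      simp [hE]
    rwa [hEu]
  have hEcent : ∀ u : ghat, ∀ y : ghat, ⁅y, E u⁆ = 0 := by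
    intro u
    have := hCcent (hEC u)
    rw [LieModule.mem_maxTrivSubmodule] at this
    exact this
  have hEbrackets : ∀ a b : ghat, E ⁅a, b⁆ = 0 := by
    intro a b
    rw [LieDerivation.apply_lie_eq_sub, hEcent b a, hEcent a b, sub_zero]
  have hEzero : ∀ x : ghat, E x = 0 := by
    have hle : (⁅(⊤ : LieIdeal F ghat), (⊤ : LieIdeal F ghat)⁆ : LieIdeal F ghat).toSubmodule ≤
        LinearMap.ker (E : ghat →ₗ[F] ghat) := by
      rw [LieSubmodule.lieIdeal_oper_eq_linear_span']
      apply Submodule.span_le.mpr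
      rintro _ ⟨a, -, b, -, rfl⟩
      rw [SetLike.mem_coe, LinearMap.mem_ker]
      exact hEbrackets a b
    intro x
    have := hle (hgperf x)
    rwa [LinearMap.mem_ker] at this
  ext x
  have := hEzero x
  rw [hE] at this
  have : D x - LieDerivation.ad F ghat v x = 0 := by
    simpa using this
  rw [← sub_eq_zero]
  exact this
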